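/- Consider the GARCH log-price setup with constant drift: (ε_n)_{n=1}^T i.i.d. standard normal on (Ω, F, ℙ), filtration F_n = σ(ε_1,…,ε_n), a predictable volatility process (σ_n) with σ_n² ≥ ω > 0 almost surely, and h ∈ L²(Ω, F_T, ℙ). Define F, G : ℝ → ℝ by F(μ) := E[h · Π_{j=1}^T (1 − (μ/σ_j)ε_j)] and G(μ) := E[h · Π_{j=1}^T exp(−(μ/σ_j)ε_j − μ²/(2σ_j²))]. Then F and G are differentiable at μ = 0 with F(0) = G(0) = E[h] and F'(0) = G'(0) = −Σ_{j=1}^T E[h ε_j/σ_j]; i.e. the linear Taylor expansions at μ = 0 of F and G coincide. -/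

import Mathlib

open MeasureTheory ProbabilityTheory

section stmt15aux
open Real


lemma stmt15_gauss_exp (t : ℝ) :
    Integrable (fun x => Real.exp (t * |x|)) (gaussianReal 0 1) := by
  rw [gaussianReal_of_var_ne_zero 0 one_ne_zero]
  rw [integrable_withDensity_iff (measurable_gaussianPDF 0 1)
    (Filter.Eventually.of_forall fun x => ENNReal.ofReal_lt_top)]
  have hform : ∀ x : ℝ, ((gaussianPDF 0 1 x).toReal : ℝ)
      = (Real.sqrt (2 * π))⁻¹ * Real.exp (-x ^ 2 / 2) := by
    intro x
    rw [gaussianPDF, ENNReal.toReal_ofReal (gaussianPDFReal_nonneg _ _ _), gaussianPDFReal]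
    norm_num
  refine Integrable.mono' (g := fun x => (Real.sqrt (2 * π))⁻¹ * Real.exp (t ^ 2) *
      Real.exp (-(4⁻¹ : ℝ) * x ^ 2)) ((integrable_exp_neg_mul_sq (by norm_num)).const_mul _) ?_ ?_
  · apply Continuous.aestronglyMeasurable
    exact (Real.continuous_exp.comp (continuous_const.mul continuous_abs)).mul
      (by continuity)
  · refine Filter.Eventually.of_forall fun x => ?_
    rw [hform]
    have h1 : 0 ≤ (Real.sqrt (2 * π))⁻¹ := by positivity
    have key : t * |x| + -x ^ 2 / 2 ≤ t ^ 2 + -(4⁻¹ : ℝ) * x ^ 2 := by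
      nlinarith [sq_nonneg (|t| - |x| / 2), abs_nonneg x, abs_nonneg t, sq_abs x, sq_abs t,
        neg_abs_le t, le_abs_self t, mul_le_mul_of_nonneg_right (le_abs_self t) (abs_nonneg x)]
    calc ‖Real.exp (t * |x|) * ((Real.sqrt (2 * π))⁻¹ * Real.exp (-x ^ 2 / 2))‖
        = (Real.sqrt (2 * π))⁻¹ * Real.exp (t * |x| + -x ^ 2 / 2) := by
          rw [Real.norm_eq_abs, abs_of_nonneg (by positivity), Real.exp_add]; ring
      _ ≤ (Real.sqrt (2 * π))⁻¹ * Real.exp (t ^ 2 + -(4⁻¹ : ℝ) * x ^ 2) := by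
          gcongr
      _ = (Real.sqrt (2 * π))⁻¹ * Real.exp (t ^ 2) * Real.exp (-(4⁻¹ : ℝ) * x ^ 2) := by
          rw [Real.exp_add]; ring

lemma stmt15_exp_sum_int {Ω : Type*} {m0 : MeasurableSpace Ω}
    (P : Measure Ω) [IsProbabilityMeasure P]
    (T : ℕ) (ε : ℕ → Ω → ℝ) (hεmeas : ∀ k, Measurable (ε k))
    (hεindep : iIndepFun (fun i : Fin T => ε (i.val + 1)) P)
    (hεgauss : ∀ k, 1 ≤ k → k ≤ T → Measure.map (ε k) P = gaussianReal 0 1)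
    (d : ℝ) :
    Integrable (fun ω => Real.exp (d * ∑ j ∈ Finset.Icc 1 T, |ε j ω|)) P := by
  have hX : iIndepFun
      (fun i : Fin T => fun ω => |ε (i.val + 1) ω|) P :=
    hεindep.comp (fun _ => fun x : ℝ => |x|) (fun _ => measurable_abs)
  have hint : ∀ i : Fin T, Integrable (fun ω => Real.exp (d * |ε (i.val + 1) ω|)) P := by
    intro i
    have hmap := hεgauss (i.val + 1) (Nat.le_add_left 1 i.val) (by omega)
    have : Integrable ((fun x => Real.exp (d * |x|)) ∘ ε (i.val + 1)) P := by
      rw [← integrable_map_measure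
        (by rw [hmap]; exact
          (Real.continuous_exp.comp (continuous_const.mul continuous_abs)).aestronglyMeasurable)
        (hεmeas _).aemeasurable, hmap]
      exact stmt15_gauss_exp d
    exact this
  have key := hX.integrable_exp_mul_sum (t := d)
    (fun i => (hεmeas _).abs) (s := Finset.univ) (fun i _ => hint i)
  have hEq : ∀ ω, d * (∑ i : Fin T, fun ω => |ε (i.val + 1) ω|) ω
      = d * ∑ j ∈ Finset.Icc 1 T, |ε j ω| := by
    intro ω
    congr 1
    rw [Finset.sum_apply]
    rw [← Finset.Ico_add_one_right_eq_Icc, Finset.sum_Ico_eq_sum_range]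
    simp only [Nat.add_sub_cancel_left, Nat.succ_sub_one, Nat.add_sub_cancel]
    rw [← Fin.sum_univ_eq_sum_range (fun i => |ε (1 + i) ω|)]
    exact Finset.sum_congr rfl fun i _ => by rw [add_comm]
  refine key.congr (Filter.Eventually.of_forall fun ω => ?_)
  dsimp only
  rw [hEq]

end stmt15aux

set_option maxHeartbeats 1600000


/-- (First-order agreement of physical and martingale valuations.)
In the GARCH log-price setup with constant drift, for a payoff `h ∈ L²(Ω, F_T, P)` let
`Fq(μ) = E[h·Π_{j=1}^T (1 - (μ/σ_j)ε_j)]` (value process under the physical measure) and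
`Gq(μ) = E[h·Π_{j=1}^T exp(-(μ/σ_j)ε_j - μ²/(2σ_j²))]` (value under the Girsanov-type
martingale measure). Then `Fq` and `Gq` are differentiable at `μ = 0` with
`Fq(0) = Gq(0) = E[h]` and `Fq'(0) = Gq'(0) = -Σ_{j=1}^T E[h ε_j/σ_j]`. -/
theorem stmt15 {Ω : Type*} {m0 : MeasurableSpace Ω}
    (P : Measure Ω) [IsProbabilityMeasure P]
    (T : ℕ) (ε : ℕ → Ω → ℝ) (hεmeas : ∀ k, Measurable (ε k))
    (hεindep : iIndepFun (fun i : Fin T => ε (i.val + 1)) P)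
    (hεgauss : ∀ k, 1 ≤ k → k ≤ T → Measure.map (ε k) P = gaussianReal 0 1)
    (F : ℕ → MeasurableSpace Ω)
    (hF : ∀ n, F n = ⨆ k ∈ Finset.Icc 1 n, MeasurableSpace.comap (ε k) inferInstance)
    (σ : ℕ → Ω → ℝ)
    (hσpred : ∀ k, 1 ≤ k → Measurable[F (k - 1)] (σ k))
    (hσpos : ∀ k ω, 0 < σ k ω)
    (ω₀ : ℝ) (hω₀ : 0 < ω₀)
    (hσlb : ∀ k, 1 ≤ k → k ≤ T → ∀ᵐ ω ∂P, ω₀ ≤ σ k ω ^ 2)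
    (h : Ω → ℝ) (hhmeas : Measurable[F T] h) (hhL2 : MemLp h 2 P)
    (Fq Gq : ℝ → ℝ)
    (hFq : ∀ μ : ℝ, Fq μ = ∫ ω, h ω * ∏ j ∈ Finset.Icc 1 T,
        (1 - μ / σ j ω * ε j ω) ∂P)
    (hGq : ∀ μ : ℝ, Gq μ = ∫ ω, h ω * ∏ j ∈ Finset.Icc 1 T,
        Real.exp (-(μ / σ j ω) * ε j ω - μ ^ 2 / (2 * σ j ω ^ 2)) ∂P) :
    Fq 0 = ∫ ω, h ω ∂P ∧ Gq 0 = ∫ ω, h ω ∂P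
    ∧ HasDerivAt Fq (-∑ j ∈ Finset.Icc 1 T, ∫ ω, h ω * (ε j ω / σ j ω) ∂P) 0
    ∧ HasDerivAt Gq (-∑ j ∈ Finset.Icc 1 T, ∫ ω, h ω * (ε j ω / σ j ω) ∂P) 0 := by
  classical
  set s : Finset ℕ := Finset.Icc 1 T with hs
  set c : ℝ := (Real.sqrt ω₀)⁻¹ with hcdef
  have hrt : 0 < Real.sqrt ω₀ := Real.sqrt_pos.mpr hω₀
  have hc0 : 0 < c := inv_pos.mpr hrt
  set S : Ω → ℝ := fun ω => ∑ j ∈ s, |ε j ω| with hSdef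
  have hS0 : ∀ ω, 0 ≤ S ω := fun ω => Finset.sum_nonneg fun j _ => abs_nonneg _
  have hSmeas : Measurable S := Finset.measurable_sum s fun j _ => (hεmeas j).abs
  have HInt : ∀ d : ℝ, Integrable (fun ω => Real.exp (d * S ω)) P :=
    fun d => stmt15_exp_sum_int P T ε hεmeas hεindep hεgauss d
  -- ambient measurability
  have hm_le : ∀ n, F n ≤ m0 := by
    intro n
    rw [hF n]
    refine iSup_le fun k => iSup_le fun _ => ?_
    exact (hεmeas k).comap_le
  have hσm : ∀ k, 1 ≤ k → Measurable (σ k) :=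
    fun k hk => (hσpred k hk).mono (hm_le (k - 1)) le_rfl
  have hhm : Measurable h := hhmeas.mono (hm_le T) le_rfl
  -- a.e. lower bound on σ
  have hae : ∀ᵐ ω ∂P, ∀ j, j ∈ s → Real.sqrt ω₀ ≤ σ j ω := by
    rw [ae_all_iff]
    intro j
    by_cases hj : j ∈ s
    · obtain ⟨hj1, hj2⟩ := Finset.mem_Icc.mp hj
      filter_upwards [hσlb j hj1 hj2] with ω hω _
      calc Real.sqrt ω₀ ≤ Real.sqrt (σ j ω ^ 2) := Real.sqrt_le_sqrt hω
        _ = σ j ω := Real.sqrt_sq (hσpos j ω).le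
    · filter_upwards with ω hj'; exact absurd hj' hj
  -- L² facts
  have hg2 : MemLp (fun ω => Real.exp (2 * c * S ω)) 2 P := by
    rw [memLp_two_iff_integrable_sq (show AEStronglyMeasurable (fun ω => Real.exp (2 * c * S ω)) P from
      ((measurable_const.mul hSmeas).exp).aestronglyMeasurable)]
    refine (HInt (4 * c)).congr (Filter.Eventually.of_forall fun ω => ?_)
    dsimp only
    rw [sq, ← Real.exp_add]
    congr 1
    ring
  have hBint : Integrable (fun ω => |h ω| * Real.exp (2 * c * S ω)) P := by
    have h1 : Integrable (fun ω => h ω * Real.exp (2 * c * S ω)) P := by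
      rw [← memLp_one_iff_integrable]
      exact MemLp.smul (r := 1) hg2 hhL2
    refine h1.abs.congr (Filter.Eventually.of_forall fun ω => ?_)
    dsimp only
    rw [abs_mul, abs_of_pos (Real.exp_pos _)]
  have hHa : ∀ j ∈ s, Integrable (fun ω => h ω * (ε j ω / σ j ω)) P := by
    intro j hj
    have hj1 : 1 ≤ j := (Finset.mem_Icc.mp hj).1
    have hq2 : MemLp (fun ω => ε j ω / σ j ω) 2 P := by
      rw [memLp_two_iff_integrable_sq (show AEStronglyMeasurable (fun ω => ε j ω / σ j ω) P from
        ((hεmeas j).div (hσm j hj1)).aestronglyMeasurable)]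
      refine Integrable.mono' ((HInt 2).const_mul (c ^ 2))
        (((hεmeas j).div (hσm j hj1)).pow_const 2).aestronglyMeasurable ?_
      filter_upwards [hae] with ω hω
      have hσω := hω j hj
      have hσpos' := hσpos j ω
      have h1 : |ε j ω| / σ j ω ≤ c * |ε j ω| := by
        rw [hcdef, inv_mul_eq_div]
        exact div_le_div_of_nonneg_left (abs_nonneg _) hrt hσω
      have h2 : |ε j ω| ≤ S ω := by
        rw [hSdef]
        exact Finset.single_le_sum (f := fun i => |ε i ω|) (fun i _ => abs_nonneg _) hj
      have h3 : S ω ≤ Real.exp (S ω) := (Real.add_one_le_exp (S ω)).trans' (by linarith)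
      have h4 : (ε j ω / σ j ω) ^ 2 = (|ε j ω| / σ j ω) ^ 2 := by
        rw [div_pow, div_pow, sq_abs]
      rw [Real.norm_eq_abs, abs_of_nonneg (sq_nonneg _), h4]
      calc (|ε j ω| / σ j ω) ^ 2 ≤ (c * |ε j ω|) ^ 2 := by
            apply pow_le_pow_left₀ (by positivity) h1
        _ = c ^ 2 * |ε j ω| ^ 2 := by ring
        _ ≤ c ^ 2 * Real.exp (2 * S ω) := by
            apply mul_le_mul_of_nonneg_left _ (by positivity)
            calc |ε j ω| ^ 2 ≤ S ω ^ 2 := by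
                  apply pow_le_pow_left₀ (abs_nonneg _) h2
              _ ≤ Real.exp (S ω) ^ 2 := by
                  apply pow_le_pow_left₀ (hS0 ω) h3
              _ = Real.exp (2 * S ω) := by
                  rw [sq, ← Real.exp_add]; ring_nf
    rw [← memLp_one_iff_integrable]
    exact MemLp.smul (r := 1) hq2 hhL2
  -- pointwise bound helper facts
  have hexp2 : ∀ ω : Ω, Real.exp (c * S ω) * Real.exp (c * S ω) = Real.exp (2 * c * S ω) := by
    intro ω; rw [← Real.exp_add]; ring_nf
  have he1 : ∀ ω : Ω, c * S ω ≤ Real.exp (c * S ω) := fun ω => by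
    linarith [Real.add_one_le_exp (c * S ω)]
  have hone_le : (1 : ℝ) ≤ 1 + (T : ℝ) * c ^ 2 := le_add_of_nonneg_right (by positivity)
  -- the common bound
  set B : Ω → ℝ := fun ω => (1 + (T : ℝ) * c ^ 2) * (|h ω| * Real.exp (2 * c * S ω)) with hBdef
  have hBint' : Integrable B P := hBint.const_mul _
  -- the derivative value at 0 rewritten
  have hval0 : ∀ ω, h ω * ∑ i ∈ s, (-(ε i ω / σ i ω)) = ∑ i ∈ s, -(h ω * (ε i ω / σ i ω)) := by
    intro ω
    rw [Finset.mul_sum]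
    exact Finset.sum_congr rfl fun i _ => by ring
  have hintsum : ∫ ω, ∑ i ∈ s, -(h ω * (ε i ω / σ i ω)) ∂P
      = -∑ j ∈ s, ∫ ω, h ω * (ε j ω / σ j ω) ∂P := by
    calc ∫ ω, ∑ i ∈ s, -(h ω * (ε i ω / σ i ω)) ∂P
        = ∑ i ∈ s, ∫ ω, -(h ω * (ε i ω / σ i ω)) ∂P :=
          integral_finset_sum s (fun i hi => (hHa i hi).neg)
      _ = ∑ i ∈ s, -∫ ω, h ω * (ε i ω / σ i ω) ∂P :=
          Finset.sum_congr rfl fun i _ => integral_neg _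
      _ = -∑ j ∈ s, ∫ ω, h ω * (ε j ω / σ j ω) ∂P := by rw [← Finset.sum_neg_distrib]
  -- ================= Fq =================
  have keyF : Integrable (fun ω => h ω * ∑ i ∈ s,
        (∏ j ∈ s.erase i, (1 - (0:ℝ) / σ j ω * ε j ω)) * (-(ε i ω / σ i ω))) P ∧
      HasDerivAt (fun x : ℝ => ∫ ω, h ω * ∏ j ∈ s, (1 - x / σ j ω * ε j ω) ∂P)
        (∫ ω, h ω * ∑ i ∈ s,
          (∏ j ∈ s.erase i, (1 - (0:ℝ) / σ j ω * ε j ω)) * (-(ε i ω / σ i ω)) ∂P) 0 := by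
    refine hasDerivAt_integral_of_dominated_loc_of_deriv_le (𝕜 := ℝ)
      (F := fun x ω => h ω * ∏ j ∈ s, (1 - x / σ j ω * ε j ω))
      (F' := fun x ω => h ω * ∑ i ∈ s,
        (∏ j ∈ s.erase i, (1 - x / σ j ω * ε j ω)) * (-(ε i ω / σ i ω)))
      (bound := B) (Metric.ball_mem_nhds 0 one_pos) ?_ ?_ ?_ ?_ hBint' ?_
    · refine Filter.Eventually.of_forall fun x => ?_
      exact (hhm.mul (Finset.measurable_prod s fun j hj =>
        ((measurable_const.div (hσm j (Finset.mem_Icc.mp hj).1)).mul (hεmeas j)).const_sub 1)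
        ).aestronglyMeasurable
    · refine (hhL2.integrable one_le_two).congr (Filter.Eventually.of_forall fun ω => ?_)
      simp
    · refine Measurable.aestronglyMeasurable ?_
      refine hhm.mul (Finset.measurable_sum s fun i hi => Measurable.mul ?_ ?_)
      · exact Finset.measurable_prod _ fun j hj =>
          ((measurable_const.div (hσm j (Finset.mem_Icc.mp (Finset.mem_of_mem_erase hj)).1)).mul
            (hεmeas j)).const_sub 1
      · exact ((hεmeas i).div (hσm i (Finset.mem_Icc.mp hi).1)).neg
    · -- bound
      filter_upwards [hae] with ω hω
      intro x hx
      have hx1 : |x| ≤ 1 := by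
        have := Metric.mem_ball.mp hx
        rw [Real.dist_eq, sub_zero] at this
        exact this.le
      have hfrac : ∀ j ∈ s, |ε j ω| / σ j ω ≤ c * |ε j ω| := fun j hj => by
        rw [hcdef, inv_mul_eq_div]
        exact div_le_div_of_nonneg_left (abs_nonneg _) hrt (hω j hj)
      have hfactor : ∀ j ∈ s, |1 - x / σ j ω * ε j ω| ≤ Real.exp (c * |ε j ω|) := by
        intro j hj
        have h1 : |x / σ j ω * ε j ω| ≤ c * |ε j ω| := by
          rw [abs_mul, abs_div, abs_of_pos (hσpos j ω)]
          calc |x| / σ j ω * |ε j ω| ≤ 1 / σ j ω * |ε j ω| := by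
                gcongr
                exact (hσpos j ω).le
            _ = |ε j ω| / σ j ω := by ring
            _ ≤ c * |ε j ω| := hfrac j hj
        calc |1 - x / σ j ω * ε j ω| ≤ |(1:ℝ)| + |x / σ j ω * ε j ω| := abs_sub _ _
          _ ≤ 1 + c * |ε j ω| := by rw [abs_one]; linarith
          _ ≤ Real.exp (c * |ε j ω|) := by linarith [Real.add_one_le_exp (c * |ε j ω|)]
      have hprod : ∀ i ∈ s, |∏ j ∈ s.erase i, (1 - x / σ j ω * ε j ω)| ≤ Real.exp (c * S ω) := by
        intro i hi
        rw [Finset.abs_prod]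
        calc ∏ j ∈ s.erase i, |1 - x / σ j ω * ε j ω|
            ≤ ∏ j ∈ s.erase i, Real.exp (c * |ε j ω|) :=
              Finset.prod_le_prod (fun j _ => abs_nonneg _)
                (fun j hj => hfactor j (Finset.mem_of_mem_erase hj))
          _ ≤ ∏ j ∈ s, Real.exp (c * |ε j ω|) := by
              rw [← Finset.prod_erase_mul s (fun j => Real.exp (c * |ε j ω|)) hi]
              exact le_mul_of_one_le_right
                (Finset.prod_nonneg fun j _ => (Real.exp_pos _).le)
                (Real.one_le_exp (by positivity))
          _ = Real.exp (∑ j ∈ s, c * |ε j ω|) := (Real.exp_sum s _).symm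
          _ = Real.exp (c * S ω) := by rw [← Finset.mul_sum]
      rw [Real.norm_eq_abs, abs_mul, hBdef]
      calc |h ω| * |∑ i ∈ s, (∏ j ∈ s.erase i, (1 - x / σ j ω * ε j ω)) * (-(ε i ω / σ i ω))|
          ≤ |h ω| * (Real.exp (c * S ω) * (c * S ω)) := by
            apply mul_le_mul_of_nonneg_left _ (abs_nonneg _)
            calc |∑ i ∈ s, (∏ j ∈ s.erase i, (1 - x / σ j ω * ε j ω)) * (-(ε i ω / σ i ω))|
                ≤ ∑ i ∈ s, |(∏ j ∈ s.erase i, (1 - x / σ j ω * ε j ω)) * (-(ε i ω / σ i ω))| :=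
                  Finset.abs_sum_le_sum_abs _ _
              _ ≤ ∑ i ∈ s, Real.exp (c * S ω) * (c * |ε i ω|) := by
                  refine Finset.sum_le_sum fun i hi => ?_
                  rw [abs_mul, abs_neg]
                  have h2 : |ε i ω / σ i ω| ≤ c * |ε i ω| := by
                    rw [abs_div, abs_of_pos (hσpos i ω)]; exact hfrac i hi
                  exact mul_le_mul (hprod i hi) h2 (abs_nonneg _) (Real.exp_pos _).le
              _ = Real.exp (c * S ω) * (c * S ω) := by
                  rw [← Finset.mul_sum, ← Finset.mul_sum]
        _ ≤ |h ω| * Real.exp (2 * c * S ω) := by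
            apply mul_le_mul_of_nonneg_left _ (abs_nonneg _)
            calc Real.exp (c * S ω) * (c * S ω)
                ≤ Real.exp (c * S ω) * Real.exp (c * S ω) :=
                  mul_le_mul_of_nonneg_left (he1 ω) (Real.exp_pos _).le
              _ = Real.exp (2 * c * S ω) := hexp2 ω
        _ ≤ (1 + (T : ℝ) * c ^ 2) * (|h ω| * Real.exp (2 * c * S ω)) :=
            le_mul_of_one_le_left (by positivity) hone_le
    · -- differentiability
      filter_upwards with ω
      intro x hx
      have hfac : ∀ j ∈ s, HasDerivAt (fun μ : ℝ => 1 - μ / σ j ω * ε j ω)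
          (-(ε j ω / σ j ω)) x := by
        intro j hj
        have h1 : HasDerivAt (fun μ : ℝ => μ / σ j ω * ε j ω) (1 / σ j ω * ε j ω) x := by
          simpa using ((hasDerivAt_id x).div_const (σ j ω)).mul_const (ε j ω)
        have h2 := h1.const_sub 1
        rw [show -(ε j ω / σ j ω) = -(1 / σ j ω * ε j ω) by ring]
        exact h2
      have hp := HasDerivAt.finset_prod (u := s)
        (f := fun j (μ : ℝ) => 1 - μ / σ j ω * ε j ω)
        (f' := fun j => -(ε j ω / σ j ω)) hfac
      simpa [smul_eq_mul] using hp.const_mul (h ω)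
  have hvalF : ∫ ω, h ω * ∑ i ∈ s,
      (∏ j ∈ s.erase i, (1 - (0:ℝ) / σ j ω * ε j ω)) * (-(ε i ω / σ i ω)) ∂P
      = -∑ j ∈ s, ∫ ω, h ω * (ε j ω / σ j ω) ∂P := by
    rw [← hintsum]
    refine integral_congr_ae (Filter.Eventually.of_forall fun ω => ?_)
    dsimp only
    rw [← hval0]
    congr 1
    refine Finset.sum_congr rfl fun i _ => ?_
    simp
  have hFq0 : Fq 0 = ∫ ω, h ω ∂P := by
    rw [hFq 0]
    refine integral_congr_ae (Filter.Eventually.of_forall fun ω => ?_)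
    simp
  have hFqderiv : HasDerivAt Fq (-∑ j ∈ s, ∫ ω, h ω * (ε j ω / σ j ω) ∂P) 0 := by
    have hfun : Fq = fun x : ℝ => ∫ ω, h ω * ∏ j ∈ s, (1 - x / σ j ω * ε j ω) ∂P :=
      funext hFq
    rw [hfun, ← hvalF]
    exact keyF.2
  -- ================= Gq =================
  have keyG : Integrable (fun ω => h ω * ∑ i ∈ s,
        (∏ j ∈ s.erase i, Real.exp (-((0:ℝ) / σ j ω) * ε j ω - (0:ℝ) ^ 2 / (2 * σ j ω ^ 2)))
          * (Real.exp (-((0:ℝ) / σ i ω) * ε i ω - (0:ℝ) ^ 2 / (2 * σ i ω ^ 2))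
            * (-(ε i ω / σ i ω) - (0:ℝ) / σ i ω ^ 2))) P ∧
      HasDerivAt (fun x : ℝ => ∫ ω, h ω * ∏ j ∈ s,
          Real.exp (-(x / σ j ω) * ε j ω - x ^ 2 / (2 * σ j ω ^ 2)) ∂P)
        (∫ ω, h ω * ∑ i ∈ s,
          (∏ j ∈ s.erase i, Real.exp (-((0:ℝ) / σ j ω) * ε j ω - (0:ℝ) ^ 2 / (2 * σ j ω ^ 2)))
            * (Real.exp (-((0:ℝ) / σ i ω) * ε i ω - (0:ℝ) ^ 2 / (2 * σ i ω ^ 2))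
              * (-(ε i ω / σ i ω) - (0:ℝ) / σ i ω ^ 2)) ∂P) 0 := by
    refine hasDerivAt_integral_of_dominated_loc_of_deriv_le (𝕜 := ℝ)
      (F := fun x ω => h ω * ∏ j ∈ s,
        Real.exp (-(x / σ j ω) * ε j ω - x ^ 2 / (2 * σ j ω ^ 2)))
      (F' := fun x ω => h ω * ∑ i ∈ s,
        (∏ j ∈ s.erase i, Real.exp (-(x / σ j ω) * ε j ω - x ^ 2 / (2 * σ j ω ^ 2)))
          * (Real.exp (-(x / σ i ω) * ε i ω - x ^ 2 / (2 * σ i ω ^ 2))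
            * (-(ε i ω / σ i ω) - x / σ i ω ^ 2)))
      (bound := B) (Metric.ball_mem_nhds 0 one_pos) ?_ ?_ ?_ ?_ hBint' ?_
    · refine Filter.Eventually.of_forall fun x => ?_
      refine (hhm.mul (Finset.measurable_prod s fun j hj => Measurable.exp ?_)).aestronglyMeasurable
      exact ((measurable_const.div (hσm j (Finset.mem_Icc.mp hj).1)).neg.mul (hεmeas j)).sub
        (measurable_const.div (((hσm j (Finset.mem_Icc.mp hj).1).pow_const 2).const_mul 2))
    · refine (hhL2.integrable one_le_two).congr (Filter.Eventually.of_forall fun ω => ?_)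
      simp
    · refine Measurable.aestronglyMeasurable ?_
      refine hhm.mul (Finset.measurable_sum s fun i hi => Measurable.mul ?_ (Measurable.mul ?_ ?_))
      · refine Finset.measurable_prod _ fun j hj => Measurable.exp ?_
        have hj1 := (Finset.mem_Icc.mp (Finset.mem_of_mem_erase hj)).1
        exact ((measurable_const.div (hσm j hj1)).neg.mul (hεmeas j)).sub
          (measurable_const.div (((hσm j hj1).pow_const 2).const_mul 2))
      · exact Measurable.exp (((measurable_const.div (hσm i (Finset.mem_Icc.mp hi).1)).neg.mul
          (hεmeas i)).sub (measurable_const.div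
            (((hσm i (Finset.mem_Icc.mp hi).1).pow_const 2).const_mul 2)))
      · exact (((hεmeas i).div (hσm i (Finset.mem_Icc.mp hi).1)).neg.sub
          (measurable_const.div ((hσm i (Finset.mem_Icc.mp hi).1).pow_const 2)))
    · -- bound
      filter_upwards [hae] with ω hω
      intro x hx
      have hx1 : |x| ≤ 1 := by
        have := Metric.mem_ball.mp hx
        rw [Real.dist_eq, sub_zero] at this
        exact this.le
      have hσpos' : ∀ j ∈ s, 0 < σ j ω := fun j _ => hσpos j ω
      have hfrac : ∀ j ∈ s, |ε j ω| / σ j ω ≤ c * |ε j ω| := fun j hj => by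
        rw [hcdef, inv_mul_eq_div]
        exact div_le_div_of_nonneg_left (abs_nonneg _) hrt (hω j hj)
      have hinv2 : ∀ j ∈ s, 1 / σ j ω ^ 2 ≤ c ^ 2 := by
        intro j hj
        rw [hcdef]
        rw [div_le_iff₀ (pow_pos (hσpos j ω) 2)]
        have h1 : Real.sqrt ω₀ * Real.sqrt ω₀ ≤ σ j ω * σ j ω :=
          mul_le_mul (hω j hj) (hω j hj) hrt.le (hσpos j ω).le
        calc (1:ℝ) = (Real.sqrt ω₀ * Real.sqrt ω₀) * ((Real.sqrt ω₀)⁻¹ ^ 2) := by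
              field_simp
          _ ≤ (σ j ω * σ j ω) * ((Real.sqrt ω₀)⁻¹ ^ 2) := by
              apply mul_le_mul_of_nonneg_right h1 (by positivity)
          _ = (Real.sqrt ω₀)⁻¹ ^ 2 * σ j ω ^ 2 := by ring
      have hfactor : ∀ j ∈ s,
          Real.exp (-(x / σ j ω) * ε j ω - x ^ 2 / (2 * σ j ω ^ 2)) ≤ Real.exp (c * |ε j ω|) := by
        intro j hj
        apply Real.exp_le_exp.mpr
        have h1 : -(x / σ j ω) * ε j ω ≤ c * |ε j ω| := by
          calc -(x / σ j ω) * ε j ω ≤ |(-(x / σ j ω)) * ε j ω| := le_abs_self _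
            _ = |x| / σ j ω * |ε j ω| := by rw [abs_mul, abs_neg, abs_div,
                abs_of_pos (hσpos j ω)]
            _ ≤ 1 / σ j ω * |ε j ω| := by
                gcongr
                exact (hσpos j ω).le
            _ = |ε j ω| / σ j ω := by ring
            _ ≤ c * |ε j ω| := hfrac j hj
        have h2 : 0 ≤ x ^ 2 / (2 * σ j ω ^ 2) := by positivity
        linarith
      have hprodall : ∀ i ∈ s,
          (∏ j ∈ s.erase i, Real.exp (-(x / σ j ω) * ε j ω - x ^ 2 / (2 * σ j ω ^ 2)))
            * Real.exp (-(x / σ i ω) * ε i ω - x ^ 2 / (2 * σ i ω ^ 2))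
          ≤ Real.exp (c * S ω) := by
        intro i hi
        rw [Finset.prod_erase_mul s
          (fun j => Real.exp (-(x / σ j ω) * ε j ω - x ^ 2 / (2 * σ j ω ^ 2))) hi]
        calc ∏ j ∈ s, Real.exp (-(x / σ j ω) * ε j ω - x ^ 2 / (2 * σ j ω ^ 2))
            ≤ ∏ j ∈ s, Real.exp (c * |ε j ω|) :=
              Finset.prod_le_prod (fun j _ => (Real.exp_pos _).le) (fun j hj => hfactor j hj)
          _ = Real.exp (∑ j ∈ s, c * |ε j ω|) := (Real.exp_sum s _).symm
          _ = Real.exp (c * S ω) := by rw [← Finset.mul_sum]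
      rw [Real.norm_eq_abs, abs_mul, hBdef]
      calc |h ω| * |∑ i ∈ s, (∏ j ∈ s.erase i,
              Real.exp (-(x / σ j ω) * ε j ω - x ^ 2 / (2 * σ j ω ^ 2)))
            * (Real.exp (-(x / σ i ω) * ε i ω - x ^ 2 / (2 * σ i ω ^ 2))
              * (-(ε i ω / σ i ω) - x / σ i ω ^ 2))|
          ≤ |h ω| * (Real.exp (c * S ω) * (c * S ω) + Real.exp (c * S ω) * ((T:ℝ) * c ^ 2)) := by
            apply mul_le_mul_of_nonneg_left _ (abs_nonneg _)
            calc |∑ i ∈ s, (∏ j ∈ s.erase i,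
                    Real.exp (-(x / σ j ω) * ε j ω - x ^ 2 / (2 * σ j ω ^ 2)))
                  * (Real.exp (-(x / σ i ω) * ε i ω - x ^ 2 / (2 * σ i ω ^ 2))
                    * (-(ε i ω / σ i ω) - x / σ i ω ^ 2))|
                ≤ ∑ i ∈ s, |(∏ j ∈ s.erase i,
                    Real.exp (-(x / σ j ω) * ε j ω - x ^ 2 / (2 * σ j ω ^ 2)))
                  * (Real.exp (-(x / σ i ω) * ε i ω - x ^ 2 / (2 * σ i ω ^ 2))
                    * (-(ε i ω / σ i ω) - x / σ i ω ^ 2))| := Finset.abs_sum_le_sum_abs _ _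
              _ ≤ ∑ i ∈ s, Real.exp (c * S ω) * (c * |ε i ω| + c ^ 2) := by
                  refine Finset.sum_le_sum fun i hi => ?_
                  rw [abs_mul, abs_mul, ← mul_assoc]
                  have hpnn : (0:ℝ) ≤ (∏ j ∈ s.erase i,
                      Real.exp (-(x / σ j ω) * ε j ω - x ^ 2 / (2 * σ j ω ^ 2)))
                        * Real.exp (-(x / σ i ω) * ε i ω - x ^ 2 / (2 * σ i ω ^ 2)) := by
                    apply mul_nonneg _ (Real.exp_pos _).le
                    exact Finset.prod_nonneg fun j _ => (Real.exp_pos _).le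
                  have habs1 : |∏ j ∈ s.erase i,
                      Real.exp (-(x / σ j ω) * ε j ω - x ^ 2 / (2 * σ j ω ^ 2))|
                        * |Real.exp (-(x / σ i ω) * ε i ω - x ^ 2 / (2 * σ i ω ^ 2))|
                      ≤ Real.exp (c * S ω) := by
                    rw [abs_of_nonneg (Finset.prod_nonneg fun j _ => (Real.exp_pos _).le),
                      abs_of_pos (Real.exp_pos _)]
                    exact hprodall i hi
                  have habs2 : |(-(ε i ω / σ i ω) - x / σ i ω ^ 2)| ≤ c * |ε i ω| + c ^ 2 := by
                    calc |(-(ε i ω / σ i ω) - x / σ i ω ^ 2)|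
                        ≤ |(-(ε i ω / σ i ω))| + |x / σ i ω ^ 2| := abs_sub _ _
                      _ ≤ c * |ε i ω| + c ^ 2 := by
                          apply add_le_add
                          · rw [abs_neg, abs_div, abs_of_pos (hσpos i ω)]
                            exact hfrac i hi
                          · rw [abs_div, abs_of_pos (pow_pos (hσpos i ω) 2)]
                            calc |x| / σ i ω ^ 2 ≤ 1 / σ i ω ^ 2 := by
                                  gcongr
                              _ ≤ c ^ 2 := hinv2 i hi
                  exact mul_le_mul habs1 habs2 (abs_nonneg _) (Real.exp_pos _).le
              _ = Real.exp (c * S ω) * (c * S ω) + Real.exp (c * S ω) * ((s.card : ℝ) * c ^ 2) := by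
                  rw [← Finset.mul_sum, Finset.sum_add_distrib, ← Finset.mul_sum,
                    Finset.sum_const, nsmul_eq_mul, mul_add]
              _ = Real.exp (c * S ω) * (c * S ω) + Real.exp (c * S ω) * ((T:ℝ) * c ^ 2) := by
                  rw [hs, Nat.card_Icc]
                  norm_num
        _ ≤ (1 + (T : ℝ) * c ^ 2) * (|h ω| * Real.exp (2 * c * S ω)) := by
            have e1 : Real.exp (c * S ω) * (c * S ω) ≤ Real.exp (2 * c * S ω) := by
              calc Real.exp (c * S ω) * (c * S ω)
                  ≤ Real.exp (c * S ω) * Real.exp (c * S ω) :=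
                    mul_le_mul_of_nonneg_left (he1 ω) (Real.exp_pos _).le
                _ = Real.exp (2 * c * S ω) := hexp2 ω
            have e2 : Real.exp (c * S ω) ≤ Real.exp (2 * c * S ω) := by
              apply Real.exp_le_exp.mpr
              nlinarith [hS0 ω, hc0.le]
            have e3 : (0:ℝ) ≤ (T:ℝ) * c ^ 2 := by positivity
            have e4 : Real.exp (c * S ω) * ((T:ℝ) * c ^ 2)
                ≤ Real.exp (2 * c * S ω) * ((T:ℝ) * c ^ 2) :=
              mul_le_mul_of_nonneg_right e2 e3
            nlinarith [abs_nonneg (h ω), Real.exp_pos (2 * c * S ω)]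
    · -- differentiability
      filter_upwards with ω
      intro x hx
      have hfac : ∀ j ∈ s, HasDerivAt
          (fun μ : ℝ => Real.exp (-(μ / σ j ω) * ε j ω - μ ^ 2 / (2 * σ j ω ^ 2)))
          (Real.exp (-(x / σ j ω) * ε j ω - x ^ 2 / (2 * σ j ω ^ 2))
            * (-(ε j ω / σ j ω) - x / σ j ω ^ 2)) x := by
        intro j hj
        have hne : σ j ω ≠ 0 := (hσpos j ω).ne'
        have h1 : HasDerivAt (fun μ : ℝ => -(μ / σ j ω) * ε j ω)
            (-(1 / σ j ω) * ε j ω) x := by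
          simpa using (((hasDerivAt_id x).div_const (σ j ω)).neg.mul_const (ε j ω))
        have h2 : HasDerivAt (fun μ : ℝ => μ ^ 2 / (2 * σ j ω ^ 2))
            (2 * x / (2 * σ j ω ^ 2)) x := by
          have := (hasDerivAt_pow 2 x).div_const (2 * σ j ω ^ 2)
          simpa using this
        have h3 := (h1.sub h2).exp
        have heq : Real.exp (-(x / σ j ω) * ε j ω - x ^ 2 / (2 * σ j ω ^ 2))
            * (-(ε j ω / σ j ω) - x / σ j ω ^ 2)
            = Real.exp (-(x / σ j ω) * ε j ω - x ^ 2 / (2 * σ j ω ^ 2))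
              * (-(1 / σ j ω) * ε j ω - 2 * x / (2 * σ j ω ^ 2)) := by
          congr 1
          field_simp
        rw [heq]
        exact h3
      have hp := HasDerivAt.finset_prod (u := s)
        (f := fun j (μ : ℝ) => Real.exp (-(μ / σ j ω) * ε j ω - μ ^ 2 / (2 * σ j ω ^ 2)))
        (f' := fun j => Real.exp (-(x / σ j ω) * ε j ω - x ^ 2 / (2 * σ j ω ^ 2))
          * (-(ε j ω / σ j ω) - x / σ j ω ^ 2)) hfac
      simpa [smul_eq_mul] using hp.const_mul (h ω)
  have hvalG : ∫ ω, h ω * ∑ i ∈ s,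
      (∏ j ∈ s.erase i, Real.exp (-((0:ℝ) / σ j ω) * ε j ω - (0:ℝ) ^ 2 / (2 * σ j ω ^ 2)))
        * (Real.exp (-((0:ℝ) / σ i ω) * ε i ω - (0:ℝ) ^ 2 / (2 * σ i ω ^ 2))
          * (-(ε i ω / σ i ω) - (0:ℝ) / σ i ω ^ 2)) ∂P
      = -∑ j ∈ s, ∫ ω, h ω * (ε j ω / σ j ω) ∂P := by
    rw [← hintsum]
    refine integral_congr_ae (Filter.Eventually.of_forall fun ω => ?_)
    dsimp only
    rw [← hval0]
    congr 1
    refine Finset.sum_congr rfl fun i _ => ?_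
    norm_num
  have hGq0 : Gq 0 = ∫ ω, h ω ∂P := by
    rw [hGq 0]
    refine integral_congr_ae (Filter.Eventually.of_forall fun ω => ?_)
    norm_num
  have hGqderiv : HasDerivAt Gq (-∑ j ∈ s, ∫ ω, h ω * (ε j ω / σ j ω) ∂P) 0 := by
    have hfun : Gq = fun x : ℝ => ∫ ω, h ω * ∏ j ∈ s,
        Real.exp (-(x / σ j ω) * ε j ω - x ^ 2 / (2 * σ j ω ^ 2)) ∂P := funext hGq
    rw [hfun, ← hvalG]
    exact keyG.2
  exact ⟨hFq0, hGq0, hFqderiv, hGqderiv⟩
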